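/- Let z = τ(g(f^ω(0))). If u is a finite factor of z, then the sister of u (the word obtained from u by exchanging the letters 1 and 2) is also a factor of z. -/

import Mathlib

abbrev Word := List (Fin 3)
abbrev InfWord := ℕ → Fin 3

/-- `u` is a (finite, contiguous) factor of the infinite word `w`. -/
def IsFactor (w : InfWord) (u : Word) : Prop :=
  ∃ i : ℕ, u = (List.range u.length).map fun k => w (i + k)

/-- `u` is a prefix of the infinite word `z`. -/
def IsPrefixInf (u : Word) (z : InfWord) : Prop :=
  u = (List.range u.length).map z

/-- `p` is a period of the finite word `w`. -/
def HasPeriod (w : Word) (p : ℕ) : Prop :=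
  0 < p ∧ p ≤ w.length ∧ ∀ i : ℕ, i + p < w.length → w.getD (i + p) 0 = w.getD i 0

/-- The infinite word `w` is `α`-power-free: it has no nonempty factor `u`
with a period `p` satisfying `|u|/p ≥ α`. -/
def PowerFree (α : ℚ) (w : InfWord) : Prop :=
  ∀ (u : Word) (p : ℕ), IsFactor w u → u ≠ [] → HasPeriod u p →
    (u.length : ℚ) / (p : ℚ) < α

/-- The set of palindromic factors of a finite word. -/
def palSet (w : Word) : Set Word := {u | u <:+: w ∧ u.reverse = u}

/-- A finite word of length `n` is rich if it has exactly `n + 1`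
distinct palindromic factors (including the empty word). -/
def RichWord (w : Word) : Prop := (palSet w).ncard = w.length + 1

/-- An infinite word is rich if all of its finite factors are rich. -/
def RichSeq (z : InfWord) : Prop := ∀ u : Word, IsFactor z u → RichWord u

def fm : Fin 3 → Word := ![[0, 1], [0, 2, 2], [0, 2]]
def gm : Fin 3 → Word := ![[2, 0], [2, 1], [2]]
def t1 : Fin 3 → Word :=
  ![[0, 0, 1], [0, 0, 1, 0, 1, 1, 0, 1],
    [0, 0, 1, 0, 1, 1, 0, 1, 0, 0, 1, 0, 1, 1, 0, 1]]
def t2 : Fin 3 → Word :=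
  ![[0, 0, 2], [0, 0, 2, 0, 2, 2, 0, 2],
    [0, 0, 2, 0, 2, 2, 0, 2, 0, 0, 2, 0, 2, 2, 0, 2]]

/-- The morphism `f` on finite words. -/
def fList (w : Word) : Word := w.flatMap fm
/-- The morphism `g` on finite words. -/
def gList (w : Word) : Word := w.flatMap gm

def tauAux : Bool → Word → Word
  | _, [] => []
  | b, a :: w => (if b then t1 a else t2 a) ++ tauAux (!b) w

/-- The transducer `τ` on finite words: `t1` is applied to even-indexed letters
and `t2` to odd-indexed letters. -/
def tauList (w : Word) : Word := tauAux true w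

/-- The morphism `f` on infinite words. -/
def fInf (x : InfWord) : InfWord :=
  fun i => (fList ((List.range (i + 1)).map x)).getD i 0
/-- The morphism `g` on infinite words. -/
def gInf (x : InfWord) : InfWord :=
  fun i => (gList ((List.range (i + 1)).map x)).getD i 0
/-- The transducer `τ` on infinite words. -/
def tauInf (x : InfWord) : InfWord :=
  fun i => (tauList ((List.range (i + 1)).map x)).getD i 0

/-- The critical exponent of an infinite word. -/
noncomputable def criticalExponent (z : InfWord) : ℝ :=
  sSup {r : ℝ | ∃ (u : Word) (p : ℕ), IsFactor z u ∧ u ≠ [] ∧ HasPeriod u p ∧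
    r = (u.length : ℝ) / (p : ℝ)}
/-- The sister map exchanges the letters `1` and `2`. -/
def sister : Fin 3 → Fin 3 := ![0, 2, 1]


/-! ### Auxiliary development -/

/-- Occurrence of `w` in `y` at position `s`. -/
def Occ (y : InfWord) (s : ℕ) (w : Word) : Prop :=
  ∀ j (_ : j < w.length), w[j] = y (s + j)

lemma occ_iff {y : InfWord} {s : ℕ} {w : Word} :
    Occ y s w ↔ w = (List.range w.length).map fun j => y (s + j) := by
  constructor
  · intro h
    apply List.ext_getElem (by simp)
    intro j h1 h2
    simpa using h j h1
  · intro h j hj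
    rw [List.getElem_of_eq h hj]
    simp

lemma isFactor_iff {z : InfWord} {u : Word} : IsFactor z u ↔ ∃ i, Occ z i u := by
  unfold IsFactor
  simp only [occ_iff]

lemma occ_append {y : InfWord} {s : ℕ} {w v : Word}
    (hw : Occ y s w) (hv : Occ y (s + w.length) v) : Occ y s (w ++ v) := by
  intro j hj
  rcases lt_or_ge j w.length with h | h
  · rw [List.getElem_append_left h]
    exact hw j h
  · rw [List.getElem_append_right h]
    have := hv (j - w.length) (by simp at hj; omega)
    rw [this]
    congr 1
    omega

lemma occ_append_left {y : InfWord} {s : ℕ} {w v : Word}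
    (h : Occ y s (w ++ v)) : Occ y s w := by
  intro j hj
  have := h j (by simp; omega)
  rwa [List.getElem_append_left hj] at this

lemma occ_append_right {y : InfWord} {s : ℕ} {w v : Word}
    (h : Occ y s (w ++ v)) : Occ y (s + w.length) v := by
  intro j hj
  have := h (w.length + j) (by simp; omega)
  rw [List.getElem_append_right (by omega)] at this
  simp only [Nat.add_sub_cancel_left] at this
  rw [this, Nat.add_assoc]

/-- Generic lemma: the image of a prefix of `y` under a prefix-monotone,
length-nondecreasing map `F` is a prefix of the pointwise infinite image `Y`. -/
lemma pref_image {F : Word → Word} {y Y : InfWord}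
    (hY : ∀ i, Y i = (F ((List.range (i + 1)).map y)).getD i 0)
    (hmono : ∀ v t : Word, ∃ t', F (v ++ t) = F v ++ t')
    (hlen : ∀ v : Word, v.length ≤ (F v).length)
    {w : Word} (hw : Occ y 0 w) : Occ Y 0 (F w) := by
  intro j hj
  have hwe : w = (List.range w.length).map y := by
    have := occ_iff.mp hw
    simpa using this
  rw [Nat.zero_add, hY j]
  have split : ∀ a b : ℕ, a ≤ b →
      (List.range b).map y = (List.range a).map y ++
        ((List.range (b - a)).map fun i => y (a + i)) := by
    intro a b hab
    conv_lhs => rw [show b = a + (b - a) by omega, List.range_add]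
    rw [List.map_append, List.map_map]
    rfl
  rw [← List.getD_eq_getElem (F w) 0 hj]
  rcases le_total w.length (j + 1) with h | h
  · obtain ⟨t', ht'⟩ := hmono w (((List.range (j + 1 - w.length)).map fun i => y (w.length + i)))
    have heq : (List.range (j + 1)).map y = w ++
        ((List.range (j + 1 - w.length)).map fun i => y (w.length + i)) := by
      rw [split w.length (j + 1) h, ← hwe]
    rw [heq, ht', List.getD_append _ _ _ _ hj]
  · obtain ⟨t', ht'⟩ := hmono ((List.range (j + 1)).map y)
      ((List.range (w.length - (j + 1))).map fun i => y (j + 1 + i))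
    have hw2 : w = (List.range (j + 1)).map y ++
        ((List.range (w.length - (j + 1))).map fun i => y (j + 1 + i)) := by
      rw [← split (j + 1) w.length h, ← hwe]
    have hjlt : j < (F ((List.range (j + 1)).map y)).length := by
      have := hlen ((List.range (j + 1)).map y)
      simp only [List.length_map, List.length_range] at this
      omega
    conv_lhs => rw [hw2]
    rw [ht', List.getD_append _ _ _ _ hjlt]

lemma fm_len (a : Fin 3) : 1 ≤ (fm a).length := by fin_cases a <;> decide
lemma gm_len (a : Fin 3) : 1 ≤ (gm a).length := by fin_cases a <;> decide

lemma fList_append (w v : Word) : fList (w ++ v) = fList w ++ fList v :=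
  List.flatMap_append ..
lemma gList_append (w v : Word) : gList (w ++ v) = gList w ++ gList v :=
  List.flatMap_append ..

lemma fList_len (w : Word) : w.length ≤ (fList w).length := by
  induction w with
  | nil => simp [fList]
  | cons a w ih =>
    have := fm_len a
    simp only [fList, List.flatMap_cons, List.length_append, List.length_cons] at *
    omega

lemma gList_len (w : Word) : w.length ≤ (gList w).length := by
  induction w with
  | nil => simp [gList]
  | cons a w ih =>
    have := gm_len a
    simp only [gList, List.flatMap_cons, List.length_append, List.length_cons] at *
    omega

lemma tauAux_append : ∀ (w v : Word) (b : Bool),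
    tauAux b (w ++ v) = tauAux b w ++ tauAux (if w.length % 2 = 0 then b else !b) v
  | [], v, b => by simp [tauAux]
  | a :: w, v, b => by
    have hpar : (if (w.length + 1) % 2 = 0 then b else !b)
        = (if w.length % 2 = 0 then !b else b) := by
      rcases Nat.mod_two_eq_zero_or_one w.length with h | h <;>
        simp [h, Nat.add_mod]
    have hrec := tauAux_append w v (!b)
    simp only [Bool.not_not] at hrec
    simp only [List.cons_append, tauAux, List.length_cons, hpar, List.append_eq, hrec,
      List.append_assoc]

lemma tauAux_len : ∀ (w : Word) (b : Bool), w.length ≤ (tauAux b w).length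
  | [], b => by simp [tauAux]
  | a :: w, b => by
    have h1 : 1 ≤ (if b then t1 a else t2 a).length := by
      cases b <;> fin_cases a <;> decide
    have := tauAux_len w (!b)
    simp only [tauAux, List.length_append, List.length_cons]
    omega

lemma tauAux_sister : ∀ (w : Word) (b : Bool),
    (tauAux b w).map sister = tauAux (!b) w
  | [], b => by simp [tauAux]
  | a :: w, b => by
    have hblk : ((if b then t1 a else t2 a).map sister) = (if !b then t1 a else t2 a) := by
      cases b <;> fin_cases a <;> decide
    simp only [tauAux, List.map_append, hblk, tauAux_sister w (!b), Bool.not_not]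

lemma count2_fList (w : Word) : (fList w).count 2 % 2 = w.count 2 % 2 := by
  induction w with
  | nil => rfl
  | cons a w ih =>
    have h : fList (a :: w) = fm a ++ fList w := rfl
    rw [h, List.count_append, List.count_cons]
    fin_cases a <;> simp [fm, List.count_cons] <;> omega

lemma gList_len_parity (w : Word) : (gList w).length % 2 = w.count 2 % 2 := by
  induction w with
  | nil => rfl
  | cons a w ih =>
    have h : gList (a :: w) = gm a ++ gList w := rfl
    rw [h, List.length_append, List.count_cons]
    fin_cases a <;> simp [gm, List.count_cons] <;> omega


lemma fList_pref {x : InfWord} (hfix : fInf x = x) {w : Word}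
    (hw : Occ x 0 w) : Occ x 0 (fList w) :=
  pref_image (fun i => (congrFun hfix i).symm)
    (fun v t => ⟨fList t, fList_append v t⟩) fList_len hw

lemma gList_pref {x : InfWord} {w : Word}
    (hw : Occ x 0 w) : Occ (gInf x) 0 (gList w) :=
  pref_image (fun _ => rfl)
    (fun v t => ⟨gList t, gList_append v t⟩) gList_len hw

lemma tauList_pref {y : InfWord} {w : Word}
    (hw : Occ y 0 w) : Occ (tauInf y) 0 (tauList w) :=
  pref_image (fun _ => rfl)
    (fun v t => ⟨_, tauAux_append v t true⟩) (fun v => tauAux_len v true) hw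

lemma fIter_pref {x : InfWord} (hfix : fInf x = x) {w : Word}
    (hw : Occ x 0 w) : ∀ k, Occ x 0 (fList^[k] w) := by
  intro k
  induction k with
  | zero => exact hw
  | succ k ih =>
    rw [Function.iterate_succ_apply']
    exact fList_pref hfix ih

lemma fIter_append (k : ℕ) (w v : Word) :
    fList^[k] (w ++ v) = fList^[k] w ++ fList^[k] v := by
  induction k generalizing w v with
  | zero => rfl
  | succ k ih =>
    rw [Function.iterate_succ_apply, Function.iterate_succ_apply, fList_append,
      Function.iterate_succ_apply, ih]

lemma fIter_count2 (k : ℕ) (w : Word) :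
    (fList^[k] w).count 2 % 2 = w.count 2 % 2 := by
  induction k with
  | zero => rfl
  | succ k ih =>
    rw [Function.iterate_succ_apply', count2_fList, ih]

lemma fList_len2 (w : Word) : 2 * w.length ≤ (fList w).length := by
  induction w with
  | nil => simp [fList]
  | cons a w ih =>
    have h2 : 2 ≤ (fm a).length := by fin_cases a <;> decide
    have h : fList (a :: w) = fm a ++ fList w := rfl
    rw [h, List.length_append, List.length_cons]
    omega

lemma fIter_zero_len (k : ℕ) : k + 1 ≤ (fList^[k] ([0] : Word)).length := by
  induction k with
  | zero => decide
  | succ k ih =>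
    rw [Function.iterate_succ_apply']
    have := fList_len2 (fList^[k] ([0] : Word))
    omega

/-- Every prefix of `sister ∘ z` occurs in `z`, where `z = τ(g(x))`. -/
lemma sister_prefix_occurs {x : InfWord} (hfix : fInf x = x) (h0 : x 0 = 0)
    (m : ℕ) : ∃ r, ∀ j < m, tauInf (gInf x) (r + j) = sister (tauInf (gInf x) j) := by
  have h1 : Occ x 0 [0] := by
    intro j hj
    have hj0 : j = 0 := by simpa using hj
    subst hj0
    simpa using h0.symm
  have h5 : Occ x 0 ([0, 1, 0, 2] ++ [2]) := by
    have := fList_pref hfix (fList_pref hfix h1)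
    rwa [show fList (fList [0]) = ([0, 1, 0, 2] ++ [2] : Word) from by decide] at this
  set Q : Word := fList^[m + 1] [0, 1, 0, 2] with hQdef
  set P : Word := fList^[m] [0] with hPdef
  have hQP : Occ x 0 (Q ++ P) := by
    have hocc : Occ x 0 (fList^[m + 1] ([0, 1, 0, 2] ++ [2])) := fIter_pref hfix h5 (m + 1)
    rw [fIter_append] at hocc
    have h2 : fList^[m + 1] ([2] : Word) = P ++ fList^[m] [2] := by
      rw [Function.iterate_succ_apply, show fList [2] = ([0] : Word) ++ [2] from rfl,
        fIter_append]
    rw [h2, ← List.append_assoc] at hocc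
    exact occ_append_left hocc
  have hP0 : Occ x 0 P := fIter_pref hfix h1 m
  have hPocc : Occ x Q.length P := by
    have := occ_append_right hQP
    simpa using this
  -- g level
  have hgQP : Occ (gInf x) 0 (gList Q ++ gList P) := by
    rw [← gList_append]
    exact gList_pref hQP
  have hgP0 : Occ (gInf x) 0 (gList P) := gList_pref hP0
  set q := (gList Q).length with hqdef
  have hqodd : q % 2 = 1 := by
    rw [hqdef, gList_len_parity, hQdef, fIter_count2]
    decide
  have hgocc : Occ (gInf x) q (gList P) := by
    have := occ_append_right hgQP
    simpa using this
  -- glue with the length-q prefix of g(x)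
  have hpre : Occ (gInf x) 0 ((List.range q).map (gInf x)) := by
    intro j hj
    simp only [List.length_map, List.length_range] at hj
    simp [Nat.zero_add]
  have hV : Occ (gInf x) 0 ((List.range q).map (gInf x) ++ gList P) := by
    apply occ_append hpre
    simpa using hgocc
  -- tau level
  have hz : Occ (tauInf (gInf x)) 0 (tauList ((List.range q).map (gInf x) ++ gList P)) :=
    tauList_pref hV
  rw [tauList, tauAux_append] at hz
  simp only [List.length_map, List.length_range, hqodd] at hz
  have hz' : Occ (tauInf (gInf x)) 0
      (tauAux true ((List.range q).map (gInf x)) ++ tauAux false (gList P)) := by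
    simpa using hz
  set r := (tauAux true ((List.range q).map (gInf x))).length with hrdef
  have hzr : Occ (tauInf (gInf x)) r (tauAux false (gList P)) := by
    have := occ_append_right hz'
    simpa using this
  have hsw : tauAux false (gList P) = (tauList (gList P)).map sister := by
    rw [tauList, tauAux_sister]
    rfl
  have hz0 : Occ (tauInf (gInf x)) 0 (tauList (gList P)) := tauList_pref hgP0
  refine ⟨r, fun j hj => ?_⟩
  have hlenP : m ≤ (tauList (gList P)).length := by
    have l1 : m + 1 ≤ P.length := by rw [hPdef]; exact fIter_zero_len m
    have l2 := gList_len P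
    have l3 := tauAux_len (gList P) true
    rw [tauList]
    omega
  have hjlt : j < (tauList (gList P)).length := by omega
  have hjlt2 : j < (tauAux false (gList P)).length := by
    rw [hsw]; simpa using hjlt
  have hA := hzr j hjlt2
  have hA' : ((tauList (gList P)).map sister)[j]'(by simpa using hjlt) =
      tauInf (gInf x) (r + j) := (List.getElem_of_eq hsw.symm _).trans hA
  rw [List.getElem_map] at hA'
  have hB := hz0 j hjlt
  rw [Nat.zero_add] at hB
  rw [← hA', hB]

/-- If `u` is a factor of `z = τ(g(f^ω(0)))`, then so is its sister. -/
theorem sister_occurs (x : InfWord) (hfix : fInf x = x) (h0 : x 0 = 0)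
    (u : Word) (hu : IsFactor (tauInf (gInf x)) u) :
    IsFactor (tauInf (gInf x)) (u.map sister) := by
  rw [isFactor_iff] at hu ⊢
  obtain ⟨i, hi⟩ := hu
  obtain ⟨r, hr⟩ := sister_prefix_occurs hfix h0 (i + u.length)
  refine ⟨r + i, fun j hj => ?_⟩
  simp only [List.length_map] at hj
  rw [List.getElem_map, hi j hj, ← hr (i + j) (by omega)]
  congr 1
  omega
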